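/- Let I be a convergence ideal with the diagonal property on a Boolean algebra B. If lim_n a^k_n = b_k for every k and lim_k b_k = c, then there is a function F : ℕ → ℕ such that lim_k a^k_{F(k)} = c. -/
import Mathlib

open Filter Topology

variable {α : Type*}

/-- A convergence ideal on a Boolean algebra: a set of infinite sequences
(i) with no nonzero common lower bound, (ii) closed under subsequences,
(iii) closed under minorization, (iv) closed under pairwise joins, and
(v) containing every infinite antichain (sequence of pairwise disjoint nonzero elements). -/
def IsConvIdeal [BooleanAlgebra α] (I : Set (ℕ → α)) : Prop :=
  (∀ a ∈ I, ∀ b : α, (∀ n, b ≤ a n) → b = ⊥) ∧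
  (∀ a ∈ I, ∀ φ : ℕ → ℕ, StrictMono φ → (fun n => a (φ n)) ∈ I) ∧
  (∀ a ∈ I, ∀ b : ℕ → α, (∀ n, b n ≤ a n) → b ∈ I) ∧
  (∀ a ∈ I, ∀ b ∈ I, (fun n => a n ⊔ b n) ∈ I) ∧
  (∀ a : ℕ → α, (∀ n, a n ≠ ⊥) → (∀ i j, i ≠ j → a i ⊓ a j = ⊥) → a ∈ I)

/-- `ConvTo I a c` : the sequence `a` converges to `c`, i.e. `{a n ∆ c} ∈ I`. -/
def ConvTo [BooleanAlgebra α] (I : Set (ℕ → α)) (a : ℕ → α) (c : α) : Prop :=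
  (fun n => symmDiff (a n) c) ∈ I

theorem stmt8 [BooleanAlgebra α] (I : Set (ℕ → α)) (hI : IsConvIdeal I)
    (hdiag : ∀ x : ℕ → ℕ → α, (∀ k, x k ∈ I) → ∃ F : ℕ → ℕ, (fun k => x k (F k)) ∈ I)
    (a : ℕ → ℕ → α) (b : ℕ → α) (c : α)
    (hab : ∀ k, ConvTo I (a k) (b k)) (hbc : ConvTo I b c) :
    ∃ F : ℕ → ℕ, ConvTo I (fun k => a k (F k)) c := by
  obtain ⟨F, hF⟩ := hdiag (fun k n => symmDiff (a k n) (b k)) hab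
  refine ⟨F, ?_⟩
  obtain ⟨-, -, hmin, hjoin, -⟩ := hI
  exact hmin _ (hjoin _ hF _ hbc) _ (fun k => symmDiff_triangle _ _ _)
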